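/- For all real x with 0 < x ≤ 1, 1/x − 1/(e^x − 1) ≥ 1 − 1/(e − 1). -/

import Mathlib

lemma key_aux (t : ℝ) (ht : 0 < t) : t * Real.exp (t / 2) < Real.exp t - 1 := by
  have h1 : t / 2 < Real.sinh (t / 2) := Real.self_lt_sinh_iff.mpr (by linarith)
  have h2 : Real.exp t - 1 = Real.exp (t / 2) * (2 * Real.sinh (t / 2)) := by
    rw [Real.sinh_eq]
    have e1 : Real.exp t = Real.exp (t/2) * Real.exp (t/2) := by rw [← Real.exp_add]; ring_nf
    have e2 : Real.exp (t/2) * Real.exp (-(t/2)) = 1 := by rw [← Real.exp_add]; simp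
    linear_combination e2 + e1
  rw [h2]
  have he : (0:ℝ) < Real.exp (t / 2) := Real.exp_pos _
  nlinarith [he, h1]

lemma sq_key (t : ℝ) (ht : 0 < t) : t ^ 2 * Real.exp t < (Real.exp t - 1) ^ 2 := by
  have h := key_aux t ht
  have hpos : 0 < t * Real.exp (t / 2) := mul_pos ht (Real.exp_pos _)
  have h2 : (t * Real.exp (t / 2)) ^ 2 < (Real.exp t - 1) ^ 2 := by
    apply sq_lt_sq' (by linarith) h
  have e1 : Real.exp (t/2) * Real.exp (t/2) = Real.exp t := by rw [← Real.exp_add]; ring_nf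
  nlinarith [e1, h2]

lemma deriv_f (t : ℝ) (ht : 0 < t) :
    HasDerivAt (fun y : ℝ => 1 / y - 1 / (Real.exp y - 1))
      (-(t ^ 2)⁻¹ - (-Real.exp t / (Real.exp t - 1) ^ 2)) t := by
  have hexp : Real.exp t - 1 ≠ 0 := by
    have : 1 < Real.exp t := Real.one_lt_exp_iff.mpr ht
    linarith
  have h1 : HasDerivAt (fun y : ℝ => 1 / y) (-(t ^ 2)⁻¹) t := by
    simpa only [one_div] using hasDerivAt_inv (ne_of_gt ht)
  have h2 : HasDerivAt (fun y : ℝ => Real.exp y - 1) (Real.exp t) t :=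
    (Real.hasDerivAt_exp t).sub_const 1
  have h3 := h2.inv hexp
  have h4 := h1.sub h3
  rw [show ((fun y : ℝ => 1 / y) - (fun y => Real.exp y - 1)⁻¹) = fun y => 1 / y - 1 / (Real.exp y - 1) by funext y; simp [one_div]] at h4
  exact h4

/-- Second case of the proof of Claim B.3. -/
theorem stmt_7 (x : ℝ) (hx0 : 0 < x) (hx1 : x ≤ 1) :
    1 / x - 1 / (Real.exp x - 1) ≥ 1 - 1 / (Real.exp 1 - 1) := by
  set f : ℝ → ℝ := fun y => 1 / y - 1 / (Real.exp y - 1) with hf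
  have hf1 : f 1 = 1 - 1 / (Real.exp 1 - 1) := by simp [hf]
  rcases eq_or_lt_of_le hx1 with heq | hlt
  · rw [heq, ← hf1]
  -- strict antitone on Icc x 1
  have hanti : StrictAntiOn f (Set.Icc x 1) := by
    apply strictAntiOn_of_deriv_neg (convex_Icc x 1)
    · apply ContinuousOn.sub
      · exact continuousOn_const.div continuousOn_id fun y hy => ne_of_gt (lt_of_lt_of_le hx0 hy.1)
      · apply continuousOn_const.div (Real.continuous_exp.continuousOn.sub continuousOn_const)
        intro y hy
        have : 1 < Real.exp y := Real.one_lt_exp_iff.mpr (lt_of_lt_of_le hx0 hy.1)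
        simp only [Pi.sub_apply]
        linarith
    · intro t ht
      rw [interior_Icc] at ht
      have ht0 : 0 < t := lt_trans hx0 ht.1
      rw [(deriv_f t ht0).deriv]
      have hsq := sq_key t ht0
      have h1 : (0:ℝ) < t ^ 2 := by positivity
      have h2 : (0:ℝ) < (Real.exp t - 1) ^ 2 := by
        have : 1 < Real.exp t := Real.one_lt_exp_iff.mpr ht0
        nlinarith
      have hlt2 : Real.exp t / (Real.exp t - 1) ^ 2 < (t ^ 2)⁻¹ := by
        rw [div_lt_iff₀ h2, inv_eq_one_div, div_mul_eq_mul_div, lt_div_iff₀ h1]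
        linarith
      have : -Real.exp t / (Real.exp t - 1) ^ 2 = -(Real.exp t / (Real.exp t - 1) ^ 2) := by ring
      rw [this]
      linarith
  have := hanti (Set.mem_Icc.mpr ⟨le_refl x, hx1⟩) (Set.mem_Icc.mpr ⟨hx1, le_refl 1⟩) hlt
  rw [hf1] at this
  exact le_of_lt this
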